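/- (Sub-Gaussian inaccuracy bound, Eq. (4) of the paper, with explicit constant.) Let (X_i)_{i≥1} be i.i.d. integrable real random variables with mean m = E[X₁] > 0, and suppose X₁ − m is sub-Gaussian with variance proxy c > 0, i.e. E[exp(λ(X₁ − m))] ≤ exp(c·λ²/2) for all λ ∈ ℝ. Then for every integer j ≥ 1 and every ε ∈ (0,1), the ε-inaccuracy of the j-th tick time T_j = X₁ + ⋯ + X_j satisfies Σ_j(ε) ≤ (2·√(2c)/m)·√( j·ln(2/ε) ). -/

import Mathlib

open MeasureTheory ProbabilityTheory

/-- The `ε`-inaccuracy `Σ_j(ε)` of a random variable `S` interpreted as the time of the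
`j`-th tick of a clock: the infimum of `j·σ/μ` over all `μ > 0` and `σ ≥ 0` such that
`S` lies in `[μ − σ/2, μ + σ/2]` with probability at least `1 − ε`; it is `+∞` if no
such pair exists. -/
noncomputable def inaccuracy {Ω : Type*} [MeasurableSpace Ω] (P : Measure Ω)
    (S : Ω → ℝ) (j : ℕ) (ε : ℝ) : ENNReal :=
  ⨅ (μ : ℝ) (σ : ℝ) (_ : 0 < μ) (_ : 0 ≤ σ)
    (_ : ENNReal.ofReal (1 - ε) ≤ P {ω | S ω ∈ Set.Icc (μ - σ / 2) (μ + σ / 2)}),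
    ENNReal.ofReal (j * σ / μ)

/-- **Sub-Gaussian inaccuracy bound** (Eq. (4) of the paper, with explicit constant).
Let `(X_i)` be i.i.d. integrable real random variables with mean `m = E[X₁] > 0`, and
suppose `X₁ − m` is sub-Gaussian with variance proxy `c > 0`, i.e.
`E[exp(λ(X₁ − m))] ≤ exp(c·λ²/2)` for all `λ ∈ ℝ`.  Then for every integer `j ≥ 1` and
every `ε ∈ (0,1)`, the `ε`-inaccuracy of the `j`-th tick time `T_j = X₁ + ⋯ + X_j`
satisfies `Σ_j(ε) ≤ (2·√(2c)/m)·√(j·ln(2/ε))`. -/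
theorem subGaussian_inaccuracy_bound {Ω : Type*} [MeasurableSpace Ω]
    (P : Measure Ω) [IsProbabilityMeasure P] (X : ℕ → Ω → ℝ)
    (hmeas : ∀ k, Measurable (X k))
    (hindep : iIndepFun X P)
    (hident : ∀ k, IdentDistrib (X k) (X 0) P P)
    (hint : Integrable (X 0) P)
    (m : ℝ) (hm : m = ∫ ω, X 0 ω ∂P) (hmpos : 0 < m)
    (c : ℝ) (hc : 0 < c)
    (hsubint : ∀ l : ℝ, Integrable (fun ω => Real.exp (l * (X 0 ω - m))) P)
    (hsub : ∀ l : ℝ, ∫ ω, Real.exp (l * (X 0 ω - m)) ∂P ≤ Real.exp (c * l ^ 2 / 2))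
    (j : ℕ) (hj : 1 ≤ j) (ε : ℝ) (hε : ε ∈ Set.Ioo (0 : ℝ) 1) :
    inaccuracy P (fun ω => ∑ i ∈ Finset.range j, X i ω) j ε ≤
      ENNReal.ofReal ((2 * Real.sqrt (2 * c) / m) * Real.sqrt (j * Real.log (2 / ε))) := by
  obtain ⟨hε0, hε1⟩ := hε
  have hjpos : (0 : ℝ) < j := by exact_mod_cast hj
  set L : ℝ := Real.log (2 / ε) with hLdef
  have hL : 0 < L := Real.log_pos (by rw [lt_div_iff₀ hε0]; linarith)
  set t : ℝ := Real.sqrt (2 * j * c * L) with htdef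
  have ht0 : 0 < t := Real.sqrt_pos.mpr (by positivity)
  have ht2 : t ^ 2 = 2 * j * c * L := Real.sq_sqrt (by positivity)
  -- the centered variables
  set Y : ℕ → Ω → ℝ := fun i ω => X i ω - m with hYdef
  have hYmeas : ∀ i, Measurable (Y i) := fun i => (hmeas i).sub_const m
  have hYindep : iIndepFun Y P :=
    hindep.comp (fun _ x => x - m) (fun _ => measurable_id.sub_const m)
  have hYident : ∀ i, IdentDistrib (Y i) (Y 0) P P := fun i =>
    (hident i).comp (measurable_id.sub_const m)
  -- integrability and mgf bounds
  have hYint : ∀ l : ℝ, ∀ i, Integrable (fun ω => Real.exp (l * Y i ω)) P := by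
    intro l i
    have hmeasl : Measurable fun x : ℝ => Real.exp (l * x) := by fun_prop
    have := ((hYident i).comp hmeasl).integrable_iff
    exact this.mpr (by simpa [Function.comp_def, hYdef] using hsubint l)
  have hmgfY : ∀ l : ℝ, ∀ i, mgf (Y i) P l = ∫ ω, Real.exp (l * (X 0 ω - m)) ∂P := by
    intro l i
    have hmeasl : Measurable fun x : ℝ => Real.exp (l * x) := by fun_prop
    have := ((hYident i).comp hmeasl).integral_eq
    simpa [mgf, Function.comp, hYdef] using this
  set Z : Ω → ℝ := ∑ i ∈ Finset.range j, Y i with hZdef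
  have hZeq : ∀ ω, Z ω = (∑ i ∈ Finset.range j, X i ω) - j * m := by
    intro ω
    simp only [hZdef, Finset.sum_apply, hYdef, Finset.sum_sub_distrib]
    simp [mul_comm]
  have hZmgf : ∀ l : ℝ, mgf Z P l ≤ Real.exp (j * c * l ^ 2 / 2) := by
    intro l
    rw [hZdef, hYindep.mgf_sum hYmeas]
    calc ∏ i ∈ Finset.range j, mgf (Y i) P l
        ≤ ∏ i ∈ Finset.range j, Real.exp (c * l ^ 2 / 2) := by
          apply Finset.prod_le_prod (fun i _ => mgf_nonneg)
          intro i _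
          rw [hmgfY l i]; exact hsub l
      _ = Real.exp (j * c * l ^ 2 / 2) := by
          rw [Finset.prod_const, Finset.card_range, ← Real.exp_nat_mul]; ring_nf
  have hZint : ∀ l : ℝ, Integrable (fun ω => Real.exp (l * Z ω)) P := by
    intro l
    have := hYindep.integrable_exp_mul_sum (μ := P) (t := l) hYmeas
      (s := Finset.range j) (fun i _ => hYint l i)
    simpa [hZdef] using this
  -- Chernoff with λ = t/(j*c)
  set lam : ℝ := t / (j * c) with hlam
  have hlampos : 0 < lam := by positivity
  have hexp : -lam * t + j * c * lam ^ 2 / 2 = -L := by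
    have hjc : (j : ℝ) * c ≠ 0 := by positivity
    rw [hlam]
    field_simp
    nlinarith [ht2]
  have hεhalf : Real.exp (-L) = ε / 2 := by
    rw [Real.exp_neg, Real.exp_log (by positivity)]
    field_simp
  have hupper : (P {ω | t ≤ Z ω}).toReal ≤ ε / 2 := by
    calc (P {ω | t ≤ Z ω}).toReal
        ≤ Real.exp (-lam * t) * mgf Z P lam :=
          measure_ge_le_exp_mul_mgf t hlampos.le (hZint lam)
      _ ≤ Real.exp (-lam * t) * Real.exp (j * c * lam ^ 2 / 2) :=
          mul_le_mul_of_nonneg_left (hZmgf lam) (Real.exp_pos _).le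
      _ = Real.exp (-L) := by rw [← Real.exp_add, hexp]
      _ = ε / 2 := hεhalf
  have hlower : (P {ω | Z ω ≤ -t}).toReal ≤ ε / 2 := by
    calc (P {ω | Z ω ≤ -t}).toReal
        ≤ Real.exp (-(-lam) * (-t)) * mgf Z P (-lam) :=
          measure_le_le_exp_mul_mgf (-t) (by linarith) (hZint (-lam))
      _ ≤ Real.exp (-lam * t) * Real.exp (j * c * lam ^ 2 / 2) := by
          rw [show -(-lam) * (-t) = -lam * t by ring]
          exact mul_le_mul_of_nonneg_left (by simpa using hZmgf (-lam)) (Real.exp_pos _).le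
      _ = Real.exp (-L) := by rw [← Real.exp_add, hexp]
      _ = ε / 2 := hεhalf
  -- the event
  set S : Ω → ℝ := fun ω => ∑ i ∈ Finset.range j, X i ω with hSdef
  have hSmeas : Measurable S := by
    apply Finset.measurable_sum; intro i _; exact hmeas i
  set A : Set Ω := {ω | S ω ∈ Set.Icc (j * m - 2 * t / 2) (j * m + 2 * t / 2)} with hA
  have hAmeas : MeasurableSet A := hSmeas (measurableSet_Icc)
  have hcompl : Aᶜ ⊆ {ω | Z ω ≤ -t} ∪ {ω | t ≤ Z ω} := by
    intro ω hω
    simp only [hA, Set.mem_compl_iff, Set.mem_setOf_eq, Set.mem_Icc, not_and_or, not_le] at hω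
    rw [Set.mem_union, Set.mem_setOf_eq, Set.mem_setOf_eq, hZeq ω]
    rcases hω with h | h
    · left; linarith
    · right; linarith
  have hPAc : (P Aᶜ).toReal ≤ ε := by
    calc (P Aᶜ).toReal ≤ (P ({ω | Z ω ≤ -t} ∪ {ω | t ≤ Z ω})).toReal := by
          apply ENNReal.toReal_mono (measure_ne_top _ _) (measure_mono hcompl)
      _ ≤ (P {ω | Z ω ≤ -t}).toReal + (P {ω | t ≤ Z ω}).toReal := by
          rw [← ENNReal.toReal_add (measure_ne_top _ _) (measure_ne_top _ _)]
          exact ENNReal.toReal_mono (by finiteness) (measure_union_le _ _)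
      _ ≤ ε / 2 + ε / 2 := add_le_add hlower hupper
      _ = ε := by ring
  have hPA : ENNReal.ofReal (1 - ε) ≤ P A := by
    apply ENNReal.ofReal_le_of_le_toReal
    have : (P A).toReal = 1 - (P Aᶜ).toReal := by
      rw [measure_compl hAmeas (measure_ne_top _ _), measure_univ,
        ENNReal.toReal_sub_of_le (prob_le_one) (by simp)]
      simp
    linarith [this, hPAc]
  -- apply the infimum
  have hμpos : (0 : ℝ) < j * m := by positivity
  calc inaccuracy P S j ε
      ≤ ENNReal.ofReal (j * (2 * t) / (j * m)) := by
        refine le_trans ?_ (le_refl _)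
        exact iInf_le_of_le (j * m) (iInf_le_of_le (2 * t)
          (iInf_le_of_le hμpos (iInf_le_of_le (by linarith) (iInf_le_of_le hPA (le_refl _)))))
    _ = ENNReal.ofReal ((2 * Real.sqrt (2 * c) / m) * Real.sqrt (j * L)) := by
        congr 1
        have hjne : (j : ℝ) ≠ 0 := ne_of_gt hjpos
        have : t = Real.sqrt (2 * c) * Real.sqrt (j * L) := by
          rw [htdef, ← Real.sqrt_mul (by positivity)]
          ring_nf
        rw [this]; field_simp
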